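/- Let t₀ < t₁ be reals, let α : [t₀,t₁] → ℝ be continuously differentiable with α(x) > 0 on [t₀,t₁], and let β, γ : [t₀,t₁] → ℝ be continuous. Let u* : ℝ → ℝ be twice continuously differentiable with u*(t₀) = u*(t₁) = 0 and −(α u*')'(x) + β(x)·u*(x) = γ(x) for all x ∈ [t₀,t₁]. Assume further that ∫_{t₀}^{t₁} (α(x)·v'(x)² + β(x)·v(x)²) dx ≥ 0 for every continuously differentiable v with v(t₀) = v(t₁) = 0. Then for every continuously differentiable w : ℝ → ℝ with w(t₀) = w(t₁) = 0, ∫_{t₀}^{t₁} (α w'² + β w² − 2γ w) dx ≥ −∫_{t₀}^{t₁} γ(x)·u*(x) dx, and moreover ∫_{t₀}^{t₁} (α (u*')² + β (u*)² − 2γ u*) dx = −∫_{t₀}^{t₁} γ·u* dx. -/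

import Mathlib

open Real MeasureTheory Set

theorem stmt_10
    (t₀ t₁ : ℝ) (ht : t₀ < t₁)
    (α β γ : ℝ → ℝ)
    (hα : ContDiffOn ℝ 1 α (Icc t₀ t₁)) (hαpos : ∀ x ∈ Icc t₀ t₁, 0 < α x)
    (hβ : ContinuousOn β (Icc t₀ t₁)) (hγ : ContinuousOn γ (Icc t₀ t₁))
    (ustar : ℝ → ℝ) (hustar : ContDiff ℝ 2 ustar)
    (h0 : ustar t₀ = 0) (h1 : ustar t₁ = 0)
    (hEL : ∀ x ∈ Icc t₀ t₁,
      -deriv (fun s => α s * deriv ustar s) x + β x * ustar x = γ x)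
    (hposform : ∀ v : ℝ → ℝ, ContDiff ℝ 1 v → v t₀ = 0 → v t₁ = 0 →
      0 ≤ ∫ x in t₀..t₁, (α x * (deriv v x)^2 + β x * (v x)^2)) :
    (∀ w : ℝ → ℝ, ContDiff ℝ 1 w → w t₀ = 0 → w t₁ = 0 →
      (∫ x in t₀..t₁, (α x * (deriv w x)^2 + β x * (w x)^2 - 2 * γ x * w x))
        ≥ -∫ x in t₀..t₁, γ x * ustar x)
    ∧ (∫ x in t₀..t₁, (α x * (deriv ustar x)^2 + β x * (ustar x)^2 - 2 * γ x * ustar x))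
        = -∫ x in t₀..t₁, γ x * ustar x := by
  have hIcc : uIcc t₀ t₁ = Icc t₀ t₁ := uIcc_of_le ht.le
  have cα : ContinuousOn α (Icc t₀ t₁) := hα.continuousOn
  have hu2 : ContDiff ℝ ((1:ℕ) + 1) ustar := by exact_mod_cast hustar
  have hud : Differentiable ℝ ustar := (contDiff_succ_iff_deriv.mp hu2).1
  have hu' : ContDiff ℝ 1 (deriv ustar) := (contDiff_succ_iff_deriv.mp hu2).2.2
  have hu1 : ContDiff ℝ 1 ustar := hustar.of_le one_le_two
  have ii : ∀ f : ℝ → ℝ, ContinuousOn f (Icc t₀ t₁) →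
      IntervalIntegrable f volume t₀ t₁ := fun f hf => (hIcc ▸ hf).intervalIntegrable
  -- key lemma
  have key : ∀ v : ℝ → ℝ, ContDiff ℝ 1 v → v t₀ = 0 → v t₁ = 0 →
      (∫ x in t₀..t₁, (α x * deriv ustar x * deriv v x + β x * ustar x * v x
        - γ x * v x)) = 0 := by
    intro v hv hv0 hv1
    have hvd : Differentiable ℝ v := hv.differentiable one_ne_zero
    have hvc' : Continuous (deriv v) := hv.continuous_deriv le_rfl
    set F := fun x => α x * deriv ustar x * v x with hF
    have hFc : ContinuousOn F (Icc t₀ t₁) :=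
      (cα.mul (hu'.continuous.continuousOn)).mul hvd.continuous.continuousOn
    have hF' : ∀ x ∈ Ioo t₀ t₁, HasDerivAt F
        ((β x * ustar x - γ x) * v x + (α x * deriv ustar x) * deriv v x) x := by
      intro x hx
      have hxIcc : x ∈ Icc t₀ t₁ := Ioo_subset_Icc_self hx
      have hmem : Icc t₀ t₁ ∈ nhds x := Icc_mem_nhds hx.1 hx.2
      have hαx : DifferentiableAt ℝ α x := (hα.contDiffAt hmem).differentiableAt one_ne_zero
      have hgd : DifferentiableAt ℝ (fun s => α s * deriv ustar s) x :=
        hαx.mul ((hu'.differentiable one_ne_zero) x)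
      have heq : deriv (fun s => α s * deriv ustar s) x = β x * ustar x - γ x := by
        have := hEL x hxIcc; linarith
      have hg : HasDerivAt (fun s => α s * deriv ustar s) (β x * ustar x - γ x) x := by
        have h := hgd.hasDerivAt
        rwa [heq] at h
      exact hg.mul (hvd x).hasDerivAt
    have hint : IntervalIntegrable
        (fun x => (β x * ustar x - γ x) * v x + (α x * deriv ustar x) * deriv v x)
        volume t₀ t₁ := by
      apply ii
      exact (((hβ.mul hud.continuous.continuousOn).sub hγ).mul hvd.continuous.continuousOn).add
        ((cα.mul hu'.continuous.continuousOn).mul hvc'.continuousOn)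
    have hFTC := intervalIntegral.integral_eq_sub_of_hasDerivAt_of_le ht.le hFc hF' hint
    have hF0 : F t₁ - F t₀ = 0 := by simp [hF, hv0, hv1]
    rw [hF0] at hFTC
    rw [← hFTC]
    apply intervalIntegral.integral_congr
    intro x _
    ring
  -- value at ustar
  have Jstar : (∫ x in t₀..t₁,
      (α x * (deriv ustar x)^2 + β x * (ustar x)^2 - 2 * γ x * ustar x))
      = -∫ x in t₀..t₁, γ x * ustar x := by
    have k := key ustar hu1 h0 h1
    have i1 : IntervalIntegrable (fun x => α x * deriv ustar x * deriv ustar x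
        + β x * ustar x * ustar x - γ x * ustar x) volume t₀ t₁ := by
      apply ii
      exact (((cα.mul hu'.continuous.continuousOn).mul hu'.continuous.continuousOn).add
        ((hβ.mul hud.continuous.continuousOn).mul hud.continuous.continuousOn)).sub
        (hγ.mul hud.continuous.continuousOn)
    have i2 : IntervalIntegrable (fun x => γ x * ustar x) volume t₀ t₁ :=
      ii _ (hγ.mul hud.continuous.continuousOn)
    have hsplit : (∫ x in t₀..t₁,
        (α x * (deriv ustar x)^2 + β x * (ustar x)^2 - 2 * γ x * ustar x))
        = (∫ x in t₀..t₁, (α x * deriv ustar x * deriv ustar x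
          + β x * ustar x * ustar x - γ x * ustar x))
          - ∫ x in t₀..t₁, γ x * ustar x := by
      rw [← intervalIntegral.integral_sub i1 i2]
      apply intervalIntegral.integral_congr
      intro x _
      ring
    rw [hsplit, k, zero_sub]
  refine ⟨?_, Jstar⟩
  intro w hw hw0 hw1
  set v := fun x => w x - ustar x with hvdef
  have hv : ContDiff ℝ 1 v := hw.sub hu1
  have hv0 : v t₀ = 0 := by simp [hvdef, hw0, h0]
  have hv1 : v t₁ = 0 := by simp [hvdef, hw1, h1]
  have hwd : Differentiable ℝ w := hw.differentiable one_ne_zero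
  have hvderiv : ∀ x, deriv v x = deriv w x - deriv ustar x := by
    intro x
    exact deriv_sub (hwd x) (hud x)
  have hvd : Differentiable ℝ v := hv.differentiable one_ne_zero
  have hvc' : Continuous (deriv v) := hv.continuous_deriv le_rfl
  have k := key v hv hv0 hv1
  have q := hposform v hv hv0 hv1
  -- integrability of pieces
  have cdu : ContinuousOn (deriv ustar) (Icc t₀ t₁) := hu'.continuous.continuousOn
  have cu : ContinuousOn ustar (Icc t₀ t₁) := hud.continuous.continuousOn
  have cv : ContinuousOn v (Icc t₀ t₁) := hvd.continuous.continuousOn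
  have cdv : ContinuousOn (deriv v) (Icc t₀ t₁) := hvc'.continuousOn
  have i1 : IntervalIntegrable (fun x => α x * (deriv ustar x)^2 + β x * (ustar x)^2
      - 2 * γ x * ustar x) volume t₀ t₁ := by
    apply ii
    exact (((cα.mul (cdu.pow 2)).add (hβ.mul (cu.pow 2))).sub
      ((continuousOn_const.mul hγ).mul cu))
  have i2 : IntervalIntegrable (fun x => 2 * (α x * deriv ustar x * deriv v x
      + β x * ustar x * v x - γ x * v x)) volume t₀ t₁ := by
    apply ii
    exact continuousOn_const.mul ((((cα.mul cdu).mul cdv).add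
      ((hβ.mul cu).mul cv)).sub (hγ.mul cv))
  have i3 : IntervalIntegrable (fun x => α x * (deriv v x)^2 + β x * (v x)^2)
      volume t₀ t₁ := by
    apply ii
    exact (cα.mul (cdv.pow 2)).add (hβ.mul (cv.pow 2))
  have hsplit : (∫ x in t₀..t₁,
      (α x * (deriv w x)^2 + β x * (w x)^2 - 2 * γ x * w x))
      = (∫ x in t₀..t₁, (α x * (deriv ustar x)^2 + β x * (ustar x)^2 - 2 * γ x * ustar x))
        + ((∫ x in t₀..t₁, 2 * (α x * deriv ustar x * deriv v x
            + β x * ustar x * v x - γ x * v x))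
          + ∫ x in t₀..t₁, (α x * (deriv v x)^2 + β x * (v x)^2)) := by
    rw [← intervalIntegral.integral_add i2 i3, ← intervalIntegral.integral_add i1 (i2.add i3)]
    apply intervalIntegral.integral_congr
    intro x _
    simp only [hvderiv]
    simp only [hvdef]
    ring
  have k2 : (∫ x in t₀..t₁, 2 * (α x * deriv ustar x * deriv v x
      + β x * ustar x * v x - γ x * v x)) = 0 := by
    rw [intervalIntegral.integral_const_mul, k, mul_zero]
  rw [ge_iff_le, ← Jstar, hsplit, k2, zero_add]
  linarith
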